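/- Let H be a connected pattern graph, let 𝐇 ∈ ℋ(H) be a pattern relaxation of H, let 𝕂 be a linear piece of 𝐇 with maximum vertex z = max(𝕂), and let x <_𝕂 z be an arbitrary vertex of 𝕂. Then there exists a vertex y ∈ 𝕂 with x <_𝕂 y ≤_𝕂 z such that for every embedding φ of 𝐇 into a linear graph 𝔾, it holds that φ(x) ∈ S^{|H|}_𝔾[φ(y)], the closed strongly |H|-reachable set of φ(y). -/
import Mathlib


/-- A tree-ordered graph (tog): a simple graph together with a partial order on its
vertices that is a tree order (sets of predecessors are linearly ordered) and that
guards the edge relation (endpoints of every edge are comparable). -/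
structure Tog (V : Type) where
  G : SimpleGraph V
  le : V → V → Prop
  le_refl : ∀ v, le v v
  le_antisymm : ∀ u v, le u v → le v u → u = v
  le_trans : ∀ u v w, le u v → le v w → le u w
  tree : ∀ x y z, le y x → le z x → le y z ∨ le z y
  guard : ∀ u v, G.Adj u v → le u v ∨ le v u

namespace Tog

variable {V W : Type}

/-- A linear graph is a tog whose order is total. -/
def IsLinear (H : Tog V) : Prop := ∀ u v, H.le u v ∨ H.le v u

/-- An embedding of a tog `H` into a tog `G`: an injective map preserving edges
and the order. -/
def IsEmbedding (H : Tog V) (G : Tog W) (φ : V → W) : Prop :=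
  Function.Injective φ ∧ (∀ u v, H.G.Adj u v → G.G.Adj (φ u) (φ v)) ∧
    ∀ u v, H.le u v → G.le (φ u) (φ v)

/-- An embedding of the induced subtog `H[A]` into `G`, given as a map defined on
all of `V` but constrained only on `A`.  -/
def IsEmbeddingOn (H : Tog V) (G : Tog W) (A : Set V) (φ : V → W) : Prop :=
  Set.InjOn φ A ∧ (∀ u ∈ A, ∀ v ∈ A, H.G.Adj u v → G.G.Adj (φ u) (φ v)) ∧
    ∀ u ∈ A, ∀ v ∈ A, H.le u v → G.le (φ u) (φ v)

/-- The stem of a tog: the set of vertices comparable with every vertex,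
i.e. the maximal linearly ordered downward chain lying below all other vertices. -/
def stem (H : Tog V) : Set V := {u | ∀ v, H.le u v ∨ H.le v u}

/-- `s` is a stem prefix of `H`: a downward-closed subset of the stem. -/
def IsStemPrefix (H : Tog V) (s : Set V) : Prop :=
  s ⊆ H.stem ∧ ∀ u ∈ H.stem, ∀ v ∈ s, H.le u v → u ∈ s

/-- Leaves of a tog: vertices maximal in the tree order. -/
def leaves (H : Tog V) : Set V := {u | ∀ v, H.le u v → v = u}

/-- The vertex set of the piece induced by a set `S` of leaves: the union of the
root paths of the members of `S`. -/
def pieceSet (H : Tog V) (S : Set V) : Set V := {y | ∃ x ∈ S, H.le y x}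

/-- `H = H[A₁] ⊕ H[A₂]`: the vertex sets `A₁`, `A₂` are pieces of `H` induced by
nonempty leaf sets that partition the leaves of `H`. -/
def PieceDecomp (H : Tog V) (A₁ A₂ : Set V) : Prop :=
  ∃ S₁ S₂ : Set V, S₁.Nonempty ∧ S₂.Nonempty ∧ Disjoint S₁ S₂ ∧
    S₁ ∪ S₂ = H.leaves ∧ A₁ = H.pieceSet S₁ ∧ A₂ = H.pieceSet S₂

/-- The induced subtog on a vertex set `A`. -/
def induce (H : Tog V) (A : Set V) : Tog A where
  G := H.G.induce A
  le u v := H.le u v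
  le_refl v := H.le_refl v
  le_antisymm u v h1 h2 := Subtype.ext (H.le_antisymm _ _ h1 h2)
  le_trans u v w := H.le_trans _ _ _
  tree x y z := H.tree _ _ _
  guard u v h := H.guard _ _ h

/-- The ancestor relation of the elimination tree of a (connected) linear graph `H`:
`u` is an ancestor of `v` iff there is a walk from `u` to `v` all of whose vertices
come after `u` in the linear order. -/
def relLe (H : Tog V) (u v : V) : Prop :=
  ∃ p : H.G.Walk u v, ∀ w ∈ p.support, H.le u w

/-- The tree order relaxation `rel(H)` of a linear graph `H`: the tog on the same
graph whose order is the ancestor relation of the elimination tree of `H`. -/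
def relax (H : Tog V) (hlin : H.IsLinear) : Tog V where
  G := H.G
  le := H.relLe
  le_refl v := ⟨SimpleGraph.Walk.nil, by
    intro w hw
    simp only [SimpleGraph.Walk.support_nil, List.mem_singleton] at hw
    subst hw; exact H.le_refl w⟩
  le_antisymm u v h1 h2 := by
    obtain ⟨p, hp⟩ := h1; obtain ⟨q, hq⟩ := h2
    exact H.le_antisymm u v (hp v p.end_mem_support) (hq u q.end_mem_support)
  le_trans u v w h1 h2 := by
    obtain ⟨p, hp⟩ := h1; obtain ⟨q, hq⟩ := h2
    refine ⟨p.append q, ?_⟩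
    intro x hx
    rcases (SimpleGraph.Walk.mem_support_append_iff _ _).1 hx with h | h
    · exact hp x h
    · exact H.le_trans u v x (hp v p.end_mem_support) (hq x h)
  tree x y z h1 h2 := by
    obtain ⟨p, hp⟩ := h1; obtain ⟨q, hq⟩ := h2
    rcases hlin y z with h | h
    · left
      refine ⟨p.append q.reverse, ?_⟩
      intro w hw
      rcases (SimpleGraph.Walk.mem_support_append_iff _ _).1 hw with hw | hw
      · exact hp w hw
      · rw [SimpleGraph.Walk.support_reverse, List.mem_reverse] at hw
        exact H.le_trans y z w h (hq w hw)
    · right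
      refine ⟨q.append p.reverse, ?_⟩
      intro w hw
      rcases (SimpleGraph.Walk.mem_support_append_iff _ _).1 hw with hw | hw
      · exact hq w hw
      · rw [SimpleGraph.Walk.support_reverse, List.mem_reverse] at hw
        exact H.le_trans z y w h (hp w hw)
  guard u v h := by
    rcases H.guard u v h with hle | hle
    · left
      refine ⟨SimpleGraph.Walk.cons h SimpleGraph.Walk.nil, ?_⟩
      intro w hw
      simp only [SimpleGraph.Walk.support_cons, SimpleGraph.Walk.support_nil,
        List.mem_cons, List.mem_singleton] at hw
      rcases hw with rfl | hw
      · exact H.le_refl w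
      · rcases hw with rfl | hw
        · exact hle
        · simp at hw
    · right
      refine ⟨SimpleGraph.Walk.cons h.symm SimpleGraph.Walk.nil, ?_⟩
      intro w hw
      simp only [SimpleGraph.Walk.support_cons, SimpleGraph.Walk.support_nil,
        List.mem_cons, List.mem_singleton] at hw
      rcases hw with rfl | hw
      · exact H.le_refl w
      · rcases hw with rfl | hw
        · exact hle
        · simp at hw

/-- A tog is an etog (elimination-ordered graph) if it is the tree order relaxation
of some linear graph. -/
def IsEtog (D : Tog V) : Prop := ∃ (L : Tog V) (hlin : L.IsLinear), D = L.relax hlin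

/-- A pattern relaxation of a pattern graph `H₀`: the relaxation of some linear
ordering of `H₀`. -/
def IsPatternRelaxation (H₀ : SimpleGraph V) (HH : Tog V) : Prop :=
  ∃ (L : Tog V) (hlin : L.IsLinear), L.G = H₀ ∧ HH = L.relax hlin

/-- Weakly `r`-reachable vertices from `u` in an ordered graph `G`. -/
def wreach (G : Tog W) (r : ℕ) (u : W) : Set W :=
  {v | ∃ p : G.G.Walk u v, p.IsPath ∧ p.length ≤ r ∧ ∀ w ∈ p.support, G.le v w}

/-- Strongly `r`-reachable vertices from `u` in an ordered graph `G`. -/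
def sreach (G : Tog W) (r : ℕ) (u : W) : Set W :=
  {v | G.le v u ∧ ∃ p : G.G.Walk u v, p.IsPath ∧ p.length ≤ r ∧
    ∀ w ∈ p.support, w ≠ v → G.le u w}

/-- The embedding count `#_{x̄→ȳ}(H, G)`: the number of embeddings of `H` into `G`
mapping the (ordered) set `xb` onto `yb`. -/
noncomputable def embCount (H : Tog V) (G : Tog W) (xb : Set V) (yb : Set W) : ℕ :=
  {φ : V → W | H.IsEmbedding G φ ∧ φ '' xb = yb}.ncard

/-- The embedding count of the piece `H[A]` into `G`. -/
noncomputable def pieceEmbCount (H : Tog V) (G : Tog W) (A : Set V)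
    (xb : Set V) (yb : Set W) : ℕ :=
  {φ : A → W | (H.induce A).IsEmbedding G φ ∧ φ '' (Subtype.val ⁻¹' xb) = yb}.ncard

/-- The relaxed embedding count `#_{x̄→ȳ}(H, G | H₁, H₂)`: the number of maps whose
restrictions to the pieces `H[A₁]` and `H[A₂]` are embeddings into `G` and which map
`xb` onto `yb`. -/
noncomputable def relEmbCount (H : Tog V) (G : Tog W) (A₁ A₂ : Set V)
    (xb : Set V) (yb : Set W) : ℕ :=
  {φ : V → W | H.IsEmbeddingOn G A₁ φ ∧ H.IsEmbeddingOn G A₂ φ ∧ φ '' xb = yb}.ncard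

/-- A defect of the pieces `H[A₁]`, `H[A₂]` (decomposed along the stem prefix `xb`):
an etog `D` into which `H` does not embed, `H[A₁]` embeds via the identity, `H[A₂]`
embeds via a map `φ` that is the identity on `(A₂ \ A₁) ∪ xb`, and whose vertex set
is `A₁ ∪ φ(A₂)`. -/
def IsDefect (H : Tog V) (A₁ A₂ xb : Set V) (D : Tog V) : Prop :=
  IsEtog D ∧
  (¬ ∃ ψ : V → V, H.IsEmbedding D ψ) ∧
  H.IsEmbeddingOn D A₁ id ∧
  ∃ φ : V → V, H.IsEmbeddingOn D A₂ φ ∧ (∀ v ∈ (A₂ \ A₁) ∪ xb, φ v = v) ∧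
    A₁ ∪ φ '' A₂ = Set.univ

/-- Automorphism of a tog. -/
def IsAuto (H : Tog V) (φ : V → V) : Prop :=
  Function.Bijective φ ∧ (∀ u v, H.G.Adj u v ↔ H.G.Adj (φ u) (φ v)) ∧
    ∀ u v, H.le u v ↔ H.le (φ u) (φ v)

/-- The induced subtogs `H[xb]` and `G[yb]` are isomorphic. -/
def IndIso (H : Tog V) (G : Tog W) (xb : Set V) (yb : Set W) : Prop :=
  ∃ f : V → W, Set.BijOn f xb yb ∧ ∀ u ∈ xb, ∀ v ∈ xb,
    (H.G.Adj u v ↔ G.G.Adj (f u) (f v)) ∧ (H.le u v ↔ G.le (f u) (f v))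

end Tog



private lemma exists_min_rel {V : Type} (r : V → V → Prop)
    (htot : ∀ a b, r a b ∨ r b a) (htrans : ∀ a b c, r a b → r b c → r a c)
    (s : Finset V) : s.Nonempty → ∃ y ∈ s, ∀ v ∈ s, r y v := by
  classical
  induction s using Finset.induction_on with
  | empty => intro hs; simp at hs
  | @insert a s ha ih =>
    intro _
    replace ih := fun h => ih h
    rcases s.eq_empty_or_nonempty with rfl | hne
    · refine ⟨a, Finset.mem_insert_self _ _, ?_⟩
      intro v hv
      simp only [Finset.mem_insert, Finset.notMem_empty, or_false] at hv
      subst hv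
      rcases htot v v with h | h <;> exact h
    · obtain ⟨y, hy, hmin⟩ := ih hne
      rcases htot y a with h | h
      · refine ⟨y, Finset.mem_insert_of_mem hy, ?_⟩
        intro v hv
        rcases Finset.mem_insert.mp hv with rfl | hv
        · exact h
        · exact hmin v hv
      · refine ⟨a, Finset.mem_insert_self _ _, ?_⟩
        intro v hv
        rcases Finset.mem_insert.mp hv with rfl | hv
        · rcases htot v v with h' | h' <;> exact h'
        · exact htrans _ _ _ h (hmin v hv)

/-- Lemma linear-count-col: for every vertex `x` of a linear piece of
a pattern relaxation, strictly below the maximum `ℓ` of the piece, there is a hint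
vertex `y` of the piece, strictly above `x` and at most `ℓ`, such that for every
embedding `φ` into a linear host graph, `φ x` lies in the closed strongly
`|H|`-reachable set of `φ y`. -/
theorem linear_piece_hint_sreach {V W : Type} [Fintype V] [Fintype W]
    (H₀ : SimpleGraph V) (hconn : H₀.Connected)
    (HH : Tog V) (hrel : Tog.IsPatternRelaxation H₀ HH)
    (ℓ : V) (hℓ : ℓ ∈ HH.leaves)
    (G : Tog W) (hGlin : G.IsLinear)
    (x : V) (hx : HH.le x ℓ) (hxne : x ≠ ℓ) :
    ∃ y, HH.le x y ∧ x ≠ y ∧ HH.le y ℓ ∧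
      ∀ φ : V → W, HH.IsEmbedding G φ →
        φ x ∈ insert (φ y) (G.sreach (Fintype.card V) (φ y)) := by
  classical
  obtain ⟨L, hlin, hLG, rfl⟩ := hrel
  subst hLG
  replace hx : L.relLe x ℓ := hx
  obtain ⟨p, hp⟩ := hx
  -- the strict upset of x
  set S : Set V := {w | L.le x w ∧ w ≠ x} with hS
  -- the component of ℓ in the strict upset of x
  set C : Set V := {v | ∃ q : L.G.Walk ℓ v, ∀ w ∈ q.support, w ∈ S} with hC
  have hCS : ∀ v ∈ C, v ∈ S := by
    rintro v ⟨q, hq⟩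
    exact hq v q.end_mem_support
  have hB : ∀ v, ∀ q : L.G.Walk ℓ v, (∀ w ∈ q.support, w ∈ S) →
      ∀ w ∈ q.support, w ∈ C := by
    intro v q hq w hw
    exact ⟨q.takeUntil w hw, fun u hu => hq u (q.support_takeUntil_subset hw hu)⟩
  have hlC : ℓ ∈ C := by
    refine ⟨SimpleGraph.Walk.nil, ?_⟩
    intro w hw
    simp only [SimpleGraph.Walk.support_nil, List.mem_singleton] at hw
    rw [hw]
    exact ⟨hp ℓ p.end_mem_support, Ne.symm hxne⟩
  -- take the minimum of C in the linear order L
  have hCfin : C.Finite := Set.toFinite C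
  obtain ⟨y, hyF, hyminF⟩ := exists_min_rel L.le hlin L.le_trans hCfin.toFinset
    ⟨ℓ, hCfin.mem_toFinset.mpr hlC⟩
  have hyC : y ∈ C := hCfin.mem_toFinset.mp hyF
  have hymin : ∀ v ∈ C, L.le y v := fun v hv => hyminF v (hCfin.mem_toFinset.mpr hv)
  obtain ⟨qy, hqy⟩ := hyC
  have hqyC : ∀ w ∈ qy.support, w ∈ C := hB y qy hqy
  -- y is a tree-order lower bound of C
  have hyrel : ∀ v ∈ C, L.relLe y v := by
    rintro v ⟨qv, hqv⟩
    refine ⟨qy.reverse.append qv, ?_⟩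
    intro w hw
    rcases (SimpleGraph.Walk.mem_support_append_iff _ _).1 hw with hw | hw
    · rw [SimpleGraph.Walk.support_reverse, List.mem_reverse] at hw
      exact hymin w (hqyC w hw)
    · exact hymin w (hB v qv hqv w hw)
  -- decompose a path from x to ℓ
  have hp' := p.toPath.prop
  have hps : (p.toPath : L.G.Walk x ℓ).support ⊆ p.support := p.support_toPath_subset
  have hnn : ¬ (p.toPath : L.G.Walk x ℓ).Nil := SimpleGraph.Walk.not_nil_of_ne hxne
  obtain ⟨c, hxc, q, hq⟩ := SimpleGraph.Walk.not_nil_iff.mp hnn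
  rw [hq, SimpleGraph.Walk.cons_isPath_iff] at hp'
  have hqS : ∀ w ∈ q.support, w ∈ S := by
    intro w hw
    have hw' : w ∈ p.support := by
      apply hps
      rw [hq, SimpleGraph.Walk.support_cons]
      exact List.mem_cons_of_mem _ hw
    refine ⟨hp w hw', ?_⟩
    rintro rfl
    exact hp'.2 hw
  have hqC : ∀ w ∈ q.support, w ∈ C := by
    intro w hw
    refine hB c q.reverse ?_ w ?_
    · intro u hu
      rw [SimpleGraph.Walk.support_reverse, List.mem_reverse] at hu
      exact hqS u hu
    · rw [SimpleGraph.Walk.support_reverse, List.mem_reverse]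
      exact hw
  -- the connecting walk from y to x
  set W0 : L.G.Walk y x :=
    (qy.reverse.append q.reverse).append (SimpleGraph.Walk.cons hxc.symm SimpleGraph.Walk.nil)
    with hW0def
  have hW0 : ∀ w ∈ W0.support, w = x ∨ w ∈ C := by
    intro w hw
    rcases (SimpleGraph.Walk.mem_support_append_iff _ _).1 hw with hw | hw
    · rcases (SimpleGraph.Walk.mem_support_append_iff _ _).1 hw with hw | hw
      · rw [SimpleGraph.Walk.support_reverse, List.mem_reverse] at hw
        exact Or.inr (hqyC w hw)
      · rw [SimpleGraph.Walk.support_reverse, List.mem_reverse] at hw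
        exact Or.inr (hqC w hw)
    · simp only [SimpleGraph.Walk.support_cons, SimpleGraph.Walk.support_nil,
        List.mem_cons, List.mem_singleton] at hw
      rcases hw with rfl | hw
      · exact Or.inr (hqC w q.start_mem_support)
      · rcases hw with rfl | hw
        · exact Or.inl rfl
        · simp at hw
  have hxy : L.relLe x y := by
    refine ⟨W0.reverse, ?_⟩
    intro w hw
    rw [SimpleGraph.Walk.support_reverse, List.mem_reverse] at hw
    rcases hW0 w hw with rfl | hw
    · exact L.le_refl w
    · exact (hCS w hw).1
  have hxney : x ≠ y := fun h => (hCS y ⟨qy, hqy⟩).2 h.symm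
  refine ⟨y, hxy, hxney, ?_, ?_⟩
  · -- y ≼ ℓ
    refine ⟨qy.reverse, ?_⟩
    intro w hw
    rw [SimpleGraph.Walk.support_reverse, List.mem_reverse] at hw
    exact hymin w (hqyC w hw)
  · rintro φ ⟨hinj, hadj, hord⟩
    have hadj' : ∀ u v, L.G.Adj u v → G.G.Adj (φ u) (φ v) := hadj
    set f : L.G →g G.G := ⟨φ, fun h => hadj' _ _ h⟩ with hfdef
    set P := W0.toPath with hPdef
    have hPs : (P : L.G.Walk y x).support ⊆ W0.support := W0.support_toPath_subset
    refine Set.mem_insert_of_mem _ ?_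
    refine ⟨hord x y hxy, (P : L.G.Walk y x).map f, ?_, ?_, ?_⟩
    · exact (SimpleGraph.Walk.map_isPath_iff_of_injective hinj).mpr P.prop
    · rw [SimpleGraph.Walk.length_map]
      exact le_of_lt P.prop.length_lt
    · intro w hw hwne
      rw [SimpleGraph.Walk.support_map, List.mem_map] at hw
      obtain ⟨u, hu, rfl⟩ := hw
      have hune : u ≠ x := fun h => hwne (by rw [h]; rfl)
      rcases hW0 u (hPs hu) with rfl | huC
      · exact absurd rfl hune
      · exact hord y u (hyrel u huC)
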